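/- The gradient of the component function F_C at x ∈ ℝ^n equals (2/N) Σ_{k=1}^N (V^{(k)} x − W^{(k)} x^{(k)}), where V^{(k)} and W^{(k)} are the valence and warping matrices of the warping path p^{(k)} in configuration C. -/

import Mathlib

open Matrix

/-- A warping path of order `m × n` with 1-indexed points. -/
def IsWarpingPath (m n : ℕ) (p : List (ℕ × ℕ)) : Prop :=
  p ≠ [] ∧
  p.head? = some (1, 1) ∧
  p.getLast? = some (m, n) ∧
  (∀ q ∈ p, 1 ≤ q.1 ∧ q.1 ≤ m ∧ 1 ≤ q.2 ∧ q.2 ≤ n) ∧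
  ∀ l, l + 1 < p.length →
    (p.getD (l + 1) (0, 0) = ((p.getD l (0, 0)).1 + 1, (p.getD l (0, 0)).2) ∨
     p.getD (l + 1) (0, 0) = ((p.getD l (0, 0)).1, (p.getD l (0, 0)).2 + 1) ∨
     p.getD (l + 1) (0, 0) = ((p.getD l (0, 0)).1 + 1, (p.getD l (0, 0)).2 + 1))

/-- Value of a time series `x ∈ ℝ^m` at the 1-indexed time point `i`. -/
def tsVal {m : ℕ} (x : Fin m → ℝ) (i : ℕ) : ℝ :=
  if h : i - 1 < m then x ⟨i - 1, h⟩ else 0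

/-- Cost of aligning `x` and `y` along warping path `p`. -/
def cost {m n : ℕ} (p : List (ℕ × ℕ)) (x : Fin m → ℝ) (y : Fin n → ℝ) : ℝ :=
  (p.map fun q => (tsVal x q.1 - tsVal y q.2) ^ 2).sum

/-- Squared DTW distance. -/
noncomputable def dtwSq (m n : ℕ) (x : Fin m → ℝ) (y : Fin n → ℝ) : ℝ :=
  sInf {c | ∃ p, IsWarpingPath m n p ∧ c = cost p x y}

/-- DTW distance. -/
noncomputable def dtw (m n : ℕ) (x : Fin m → ℝ) (y : Fin n → ℝ) : ℝ :=
  Real.sqrt (dtwSq m n x y)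

/-- Warping matrix of a warping path. -/
def warpMat (m n : ℕ) (p : List (ℕ × ℕ)) : Matrix (Fin m) (Fin n) ℝ :=
  fun i j => if ((i : ℕ) + 1, (j : ℕ) + 1) ∈ p then 1 else 0

/-- Valence matrix of a warping path. -/
def valMat (m n : ℕ) (p : List (ℕ × ℕ)) : Matrix (Fin m) (Fin m) ℝ :=
  Matrix.diagonal fun i => ∑ j, warpMat m n p i j

/-- First embedding matrix `Φ` induced by a warping path. -/
def embX (m : ℕ) (p : List (ℕ × ℕ)) : Matrix (Fin p.length) (Fin m) ℝ :=
  fun l i => if (p.get l).1 = (i : ℕ) + 1 then 1 else 0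

/-- Second embedding matrix `Ψ` induced by a warping path. -/
def embY (n : ℕ) (p : List (ℕ × ℕ)) : Matrix (Fin p.length) (Fin n) ℝ :=
  fun l j => if (p.get l).2 = (j : ℕ) + 1 then 1 else 0

/- ### Auxiliary material -/

lemma list_sum_fin {α : Type*} (l : List α) (f : α → ℝ) :
    (l.map f).sum = ∑ i : Fin l.length, f (l.get i) := by
  induction l with
  | nil => simp
  | cons a t ih =>
    rw [List.map_cons, List.sum_cons, ih]
    exact (Fin.sum_univ_succ (fun i : Fin (t.length + 1) => f ((a :: t).get i))).symm

lemma warp_nodup {m n : ℕ} {p : List (ℕ × ℕ)} (hp : IsWarpingPath m n p) : p.Nodup := by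
  obtain ⟨-, -, -, -, hstep⟩ := hp
  set t : ℕ → ℕ := fun l => (p.getD l (0, 0)).1 + (p.getD l (0, 0)).2 with ht
  have step : ∀ l, l + 1 < p.length → t l < t (l + 1) := by
    intro l hl
    rcases hstep l hl with h | h | h <;> simp only [ht, h] <;> omega
  have mono : ∀ a b, a < b → b < p.length → t a < t b := by
    intro a b
    induction b with
    | zero => omega
    | succ b ih =>
      intro hab hb
      rcases Nat.lt_or_ge a b with h | h
      · exact (ih h (by omega)).trans (step b hb)
      · have hab' : a = b := by omega
        subst hab'
        exact step a hb
  have hpw : List.Pairwise (· ≠ ·) p := by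
    rw [List.pairwise_iff_get]
    intro i j hij heq
    have h1 : p.getD (i : ℕ) (0, 0) = p.get i := List.getD_eq_get _ _ i
    have h2 : p.getD (j : ℕ) (0, 0) = p.get j := List.getD_eq_get _ _ j
    have hm := mono i j hij j.isLt
    simp only [ht, h1, h2, heq] at hm
    exact lt_irrefl _ hm
  exact hpw

/-- The continuous linear map `z ↦ tsVal z a`. -/
noncomputable def tsL (n : ℕ) (a : ℕ) : EuclideanSpace ℝ (Fin n) →L[ℝ] ℝ :=
  if h : a - 1 < n then EuclideanSpace.proj (⟨a - 1, h⟩ : Fin n) else 0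

lemma tsL_apply (n a : ℕ) (z : EuclideanSpace ℝ (Fin n)) : tsL n a z = tsVal z a := by
  unfold tsL tsVal
  split <;> simp

lemma tsVal_eq {m : ℕ} (x : Fin m → ℝ) (a : ℕ) (h : a - 1 < m) :
    tsVal x a = x ⟨a - 1, h⟩ := dif_pos h

lemma key_sum {n nk : ℕ} {p : List (ℕ × ℕ)} (hp : IsWarpingPath n nk p)
    (x : Fin n → ℝ) (y : Fin nk → ℝ) (v : Fin n → ℝ) :
    (∑ l : Fin p.length,
        (2 * (tsVal x (p.get l).1 - tsVal y (p.get l).2)) * tsVal v (p.get l).1)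
      = 2 * ∑ i, ((valMat n nk p).mulVec x - (warpMat n nk p).mulVec y) i * v i := by
  have hbound := hp.2.2.2.1
  have hterm : ∀ l : Fin p.length,
      (2 * (tsVal x (p.get l).1 - tsVal y (p.get l).2)) * tsVal v (p.get l).1
        = ∑ i : Fin n, ∑ j : Fin nk,
            (if p.get l = ((i : ℕ) + 1, (j : ℕ) + 1) then (2 * (x i - y j)) * v i else 0) := by
    intro l
    have hmem : p.get l ∈ p := p.get_mem l
    obtain ⟨hq1, hq2, hq3, hq4⟩ := hbound (p.get l) hmem
    have hn1 : (p.get l).1 - 1 < n := by omega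
    have hn2 : (p.get l).2 - 1 < nk := by omega
    rw [Finset.sum_eq_single (⟨(p.get l).1 - 1, hn1⟩ : Fin n)]
    · rw [Finset.sum_eq_single (⟨(p.get l).2 - 1, hn2⟩ : Fin nk)]
      · rw [if_pos]
        · rw [tsVal_eq x _ hn1, tsVal_eq y _ hn2, tsVal_eq v _ hn1]
        · rw [Prod.ext_iff]
          constructor
          · show (p.get l).1 = (p.get l).1 - 1 + 1
            omega
          · show (p.get l).2 = (p.get l).2 - 1 + 1
            omega
      · intro j _ hne
        rw [if_neg]
        intro hcontra
        rw [Prod.ext_iff] at hcontra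
        apply hne
        apply Fin.ext
        show (j : ℕ) = (p.get l).2 - 1
        have := hcontra.2
        omega
      · intro h
        exact absurd (Finset.mem_univ _) h
    · intro i _ hne
      apply Finset.sum_eq_zero
      intro j _
      rw [if_neg]
      intro hcontra
      rw [Prod.ext_iff] at hcontra
      apply hne
      apply Fin.ext
      show (i : ℕ) = (p.get l).1 - 1
      have := hcontra.1
      omega
    · intro h
      exact absurd (Finset.mem_univ _) h
  rw [Finset.sum_congr rfl fun l _ => hterm l]
  rw [Finset.sum_comm]
  rw [show (∑ i : Fin n, ∑ l : Fin p.length, ∑ j : Fin nk,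
      (if p.get l = ((i : ℕ) + 1, (j : ℕ) + 1) then (2 * (x i - y j)) * v i else 0))
      = ∑ i : Fin n, ∑ j : Fin nk, ∑ l : Fin p.length,
      (if p.get l = ((i : ℕ) + 1, (j : ℕ) + 1) then (2 * (x i - y j)) * v i else 0)
    from Finset.sum_congr rfl fun i _ => Finset.sum_comm]
  have hcount : ∀ (c : ℕ × ℕ) (r : ℝ),
      (∑ l : Fin p.length, if p.get l = c then r else 0) = (if c ∈ p then r else 0) := by
    intro c r
    rw [← list_sum_fin p (fun q => if q = c then r else 0),
      ← List.sum_toFinset _ (warp_nodup hp)]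
    simp [Finset.sum_ite_eq', List.mem_toFinset]
  rw [Finset.mul_sum]
  refine Finset.sum_congr rfl fun i _ => ?_
  rw [Finset.sum_congr rfl fun (j : Fin nk) _ => hcount ((i : ℕ) + 1, (j : ℕ) + 1)
    ((2 * (x i - y j)) * v i)]
  have hW : ∀ j : Fin nk,
      (if ((i : ℕ) + 1, (j : ℕ) + 1) ∈ p then (2 * (x i - y j)) * v i else 0)
        = warpMat n nk p i j * (2 * x i * v i) - (warpMat n nk p i j * y j) * (2 * v i) := by
    intro j
    simp only [warpMat]
    split <;> ring
  rw [Finset.sum_congr rfl fun j _ => hW j, Finset.sum_sub_distrib, ← Finset.sum_mul,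
    ← Finset.sum_mul]
  have h1 : (valMat n nk p).mulVec x i = (∑ j, warpMat n nk p i j) * x i :=
    Matrix.mulVec_diagonal _ _ _
  have h2 : (warpMat n nk p).mulVec y i = ∑ j, warpMat n nk p i j * y j := by
    simp [Matrix.mulVec, dotProduct]
  simp only [Pi.sub_apply, h1, h2]
  ring

/-- the gradient of the component function `F_C` at `x` is
`(2/N) Σ_k (V^{(k)} x - W^{(k)} x^{(k)})`. -/
theorem component_function_gradient (n N : ℕ) (len : Fin N → ℕ)
    (X : (k : Fin N) → Fin (len k) → ℝ) (C : Fin N → List (ℕ × ℕ))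
    (hC : ∀ k, IsWarpingPath n (len k) (C k)) (x : EuclideanSpace ℝ (Fin n)) :
    HasGradientAt
      (fun z : EuclideanSpace ℝ (Fin n) => (1 / N : ℝ) * ∑ k, cost (C k) z (X k))
      ((2 / N : ℝ) • (WithLp.toLp 2 (∑ k, ((valMat n (len k) (C k)).mulVec x -
          (warpMat n (len k) (C k)).mulVec (X k))) : EuclideanSpace ℝ (Fin n))) x := by
  rw [hasGradientAt_iff_hasFDerivAt]
  have hcost : ∀ (k : Fin N) (z : EuclideanSpace ℝ (Fin n)), cost (C k) z (X k)
      = ∑ l : Fin (C k).length,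
          (tsL n ((C k).get l).1 z - tsVal (X k) ((C k).get l).2) ^ 2 := by
    intro k z
    rw [cost, list_sum_fin]
    exact Finset.sum_congr rfl fun l _ => by rw [tsL_apply]
  have hderiv : HasFDerivAt
      (fun z : EuclideanSpace ℝ (Fin n) => (1 / N : ℝ) * ∑ k, cost (C k) z (X k))
      ((1 / N : ℝ) • ∑ k, ∑ l : Fin (C k).length,
        (2 * (tsVal x ((C k).get l).1 - tsVal (X k) ((C k).get l).2)) •
          tsL n ((C k).get l).1) x := by
    apply HasFDerivAt.const_mul
    apply HasFDerivAt.fun_sum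
    intro k _
    simp only [hcost k]
    apply HasFDerivAt.fun_sum
    intro l _
    have h1 : HasFDerivAt (fun z : EuclideanSpace ℝ (Fin n) => tsL n ((C k).get l).1 z)
        (tsL n ((C k).get l).1) x := (tsL n ((C k).get l).1).hasFDerivAt
    have h2 := h1.sub_const (tsVal (X k) ((C k).get l).2)
    have h3 := h2.fun_mul h2
    have heq : (2 * (tsVal x ((C k).get l).1 - tsVal (X k) ((C k).get l).2)) •
        tsL n ((C k).get l).1
        = (tsL n ((C k).get l).1 x - tsVal (X k) ((C k).get l).2) • tsL n ((C k).get l).1 +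
          (tsL n ((C k).get l).1 x - tsVal (X k) ((C k).get l).2) • tsL n ((C k).get l).1 := by
      rw [tsL_apply, two_mul, add_smul]
    rw [heq]
    simpa only [pow_two] using h3
  have hfinal : (InnerProductSpace.toDual ℝ (EuclideanSpace ℝ (Fin n)))
      ((2 / N : ℝ) • (WithLp.toLp 2 (∑ k, ((valMat n (len k) (C k)).mulVec x -
          (warpMat n (len k) (C k)).mulVec (X k))) : EuclideanSpace ℝ (Fin n)))
      = (1 / N : ℝ) • ∑ k, ∑ l : Fin (C k).length,
        (2 * (tsVal x ((C k).get l).1 - tsVal (X k) ((C k).get l).2)) •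
          tsL n ((C k).get l).1 := by
    apply ContinuousLinearMap.ext
    intro v
    rw [InnerProductSpace.toDual_apply_apply, PiLp.inner_apply]
    have hlhs : ∀ i : Fin n,
        (inner ℝ (((2 / N : ℝ) • (WithLp.toLp 2 (∑ k, ((valMat n (len k) (C k)).mulVec x -
          (warpMat n (len k) (C k)).mulVec (X k))) : EuclideanSpace ℝ (Fin n))) i) (v i) : ℝ)
        = (2 / N : ℝ) * ((∑ k, ((valMat n (len k) (C k)).mulVec x -
          (warpMat n (len k) (C k)).mulVec (X k))) i * v i) := by
      intro i
      simp only [RCLike.inner_apply, conj_trivial, PiLp.smul_apply, PiLp.toLp_apply, smul_eq_mul]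
      ring
    rw [Finset.sum_congr rfl fun i _ => hlhs i, ← Finset.mul_sum]
    have hrhs : ∀ k : Fin N,
        (∑ l : Fin (C k).length,
          (2 * (tsVal x ((C k).get l).1 - tsVal (X k) ((C k).get l).2)) •
            tsL n ((C k).get l).1) v
        = 2 * ∑ i, ((valMat n (len k) (C k)).mulVec x -
            (warpMat n (len k) (C k)).mulVec (X k)) i * v i := by
      intro k
      rw [ContinuousLinearMap.sum_apply]
      rw [← key_sum (hC k) x (X k) v]
      exact Finset.sum_congr rfl fun l _ => by
        rw [ContinuousLinearMap.smul_apply, smul_eq_mul, tsL_apply]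
    rw [ContinuousLinearMap.smul_apply, ContinuousLinearMap.sum_apply, smul_eq_mul]
    rw [Finset.sum_congr rfl fun k _ => hrhs k]
    have hswap : (∑ i, (∑ k, ((valMat n (len k) (C k)).mulVec x -
        (warpMat n (len k) (C k)).mulVec (X k))) i * v i)
        = ∑ k, ∑ i, ((valMat n (len k) (C k)).mulVec x -
            (warpMat n (len k) (C k)).mulVec (X k)) i * v i := by
      rw [show (∑ i, (∑ k, ((valMat n (len k) (C k)).mulVec x -
          (warpMat n (len k) (C k)).mulVec (X k))) i * v i)
          = ∑ i, ∑ k, ((valMat n (len k) (C k)).mulVec x -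
            (warpMat n (len k) (C k)).mulVec (X k)) i * v i
        from Finset.sum_congr rfl fun i _ => by rw [Finset.sum_apply, Finset.sum_mul]]
      exact Finset.sum_comm
    rw [hswap, Finset.mul_sum, Finset.mul_sum]
    exact Finset.sum_congr rfl fun k _ => by ring
  rw [← hfinal] at hderiv
  exact hderiv
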